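/- Stability of the BIV condition: if mm-spaces X and Y are mm-relative (ε,δ)-close with 0 < ε ≤ ρ/12, and X satisfies BIV(Λ, ρ−2ε, 5ε), then Y satisfies BIV(e^{2δ}Λ, ρ, ε). -/

import Mathlib

open MeasureTheory Metric Set

/-- Closed `ε`-neighborhood of a set with respect to a distance function `d`. -/
def nbhdC {Z : Type*} (d : Z → Z → ℝ) (ε : ℝ) (A : Set Z) : Set Z :=
  {z | ∃ a ∈ A, d z a ≤ ε}

/-- `d` is a semi-metric on the disjoint union `X ⊕ Y` extending the metrics of `X` and `Y`. -/
def IsSemiMetricExt {X Y : Type*} [MetricSpace X] [MetricSpace Y]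
    (d : X ⊕ Y → X ⊕ Y → ℝ) : Prop :=
  (∀ z, d z z = 0) ∧ (∀ z w, 0 ≤ d z w) ∧ (∀ z w, d z w = d w z) ∧
  (∀ z w v, d z v ≤ d z w + d w v) ∧
  (∀ x x' : X, d (Sum.inl x) (Sum.inl x') = dist x x') ∧
  (∀ y y' : Y, d (Sum.inr y) (Sum.inr y') = dist y y')

/-- The mm-spaces `X` and `Y` are mm-relative `(ε,δ)`-close. -/
def MMClose {X Y : Type*} [MetricSpace X] [MetricSpace Y]
    [MeasurableSpace X] [MeasurableSpace Y]
    (μX : MeasureTheory.Measure X) (μY : MeasureTheory.Measure Y) (ε δ : ℝ) : Prop :=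
  ∃ d : X ⊕ Y → X ⊕ Y → ℝ, IsSemiMetricExt d ∧
    ∀ A : Set (X ⊕ Y), MeasurableSet A →
      μY (Sum.inr ⁻¹' A) ≤ ENNReal.ofReal (Real.exp δ) * μX (Sum.inl ⁻¹' nbhdC d ε A) ∧
      μX (Sum.inl ⁻¹' A) ≤ ENNReal.ofReal (Real.exp δ) * μY (Sum.inr ⁻¹' nbhdC d ε A)

/-- The support of a measure on a metric space. -/
def mSupp {X : Type*} [MetricSpace X] [MeasurableSpace X]
    (μ : MeasureTheory.Measure X) : Set X :=
  {x | ∀ r > 0, 0 < μ (Metric.ball x r)}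

/-- The ball intersection volume condition `BIV(Λ, ρ, ε)`. -/
def BIV {X : Type*} [MetricSpace X] [MeasurableSpace X]
    (μ : MeasureTheory.Measure X) (Λ ρ ε : ℝ) : Prop :=
  ∀ x ∈ mSupp μ, ∀ y ∈ mSupp μ, dist x y ≤ ρ + ε →
    ENNReal.ofReal Λ⁻¹ * μ (Metric.ball x (ρ + ε))
      ≤ μ (Metric.ball x ρ ∩ Metric.ball y ρ)

/-- The complement of the support is null (in a second-countable space). -/
lemma mSupp_compl_null {Z : Type*} [MetricSpace Z] [SecondCountableTopology Z]
    [MeasurableSpace Z] (μ : Measure Z) : μ (mSupp μ)ᶜ = 0 := by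
  classical
  set S : Set Z := (mSupp μ)ᶜ with hS
  have hex : ∀ x : S, ∃ r > 0, μ (Metric.ball (x : Z) r) = 0 := by
    intro x
    have hx := x.2
    simp only [hS, mSupp, mem_compl_iff, mem_setOf_eq, not_forall] at hx
    obtain ⟨r, hr, h0⟩ := hx
    exact ⟨r, hr, by simpa [pos_iff_ne_zero] using h0⟩
  choose r hr h0 using hex
  obtain ⟨T, hTc, hTeq⟩ := TopologicalSpace.isOpen_iUnion_countable
    (fun x : S => Metric.ball (x : Z) (r x)) (fun _ => isOpen_ball)
  have hcover : S ⊆ ⋃ i ∈ T, Metric.ball (i : Z) (r i) := by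
    rw [hTeq]
    intro z hz
    exact mem_iUnion.2 ⟨⟨z, hz⟩, mem_ball_self (hr ⟨z, hz⟩)⟩
  refine le_antisymm ?_ (zero_le)
  calc μ (mSupp μ)ᶜ ≤ μ (⋃ i ∈ T, Metric.ball (i : Z) (r i)) := measure_mono hcover
    _ = 0 := (measure_biUnion_null_iff hTc).2 fun i _ => h0 i

/-- The support is closed. -/
lemma mSupp_isClosed {Z : Type*} [MetricSpace Z] [MeasurableSpace Z] (μ : Measure Z) :
    IsClosed (mSupp μ) := by
  rw [← isOpen_compl_iff, Metric.isOpen_iff]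
  intro x hx
  simp only [mSupp, mem_compl_iff, mem_setOf_eq, not_forall] at hx
  obtain ⟨r, hr, h0⟩ := hx
  have h0' : μ (Metric.ball x r) = 0 := by simpa [pos_iff_ne_zero] using h0
  refine ⟨r / 2, by positivity, fun z hz => ?_⟩
  simp only [mSupp, mem_compl_iff, mem_setOf_eq, not_forall]
  refine ⟨r / 2, by positivity, ?_⟩
  have hsub : Metric.ball z (r / 2) ⊆ Metric.ball x r := by
    intro w hw
    have := dist_triangle w z x
    simp only [mem_ball] at hw hz ⊢
    linarith
  simp [pos_iff_ne_zero, measure_mono_null hsub h0']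

/-- If a set has positive measure, it meets the support. -/
lemma exists_mem_mSupp {Z : Type*} [MetricSpace Z] [SecondCountableTopology Z]
    [MeasurableSpace Z] (μ : Measure Z) {s : Set Z} (hs : μ s ≠ 0) :
    ∃ z ∈ s, z ∈ mSupp μ := by
  have h : μ (s ∩ mSupp μ) ≠ 0 := by
    intro h0
    apply hs
    have hsub : s ⊆ (s ∩ mSupp μ) ∪ (mSupp μ)ᶜ := by
      intro z hz
      by_cases hz' : z ∈ mSupp μ
      · exact Or.inl ⟨hz, hz'⟩
      · exact Or.inr hz'
    refine le_antisymm ?_ (zero_le)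
    calc μ s ≤ μ ((s ∩ mSupp μ) ∪ (mSupp μ)ᶜ) := measure_mono hsub
      _ ≤ μ (s ∩ mSupp μ) + μ (mSupp μ)ᶜ := measure_union_le _ _
      _ = 0 := by rw [h0, mSupp_compl_null]; simp
  obtain ⟨z, hz1, hz2⟩ := nonempty_of_measure_ne_zero h
  exact ⟨z, hz1, hz2⟩

/-- Given mm-closeness data, every support point of `μY` has a support point of `μX`
within `d`-distance `ε`. -/
lemma exists_close_support_point {X Y : Type*}
    [MetricSpace X] [CompactSpace X] [MeasurableSpace X] [BorelSpace X]
    [MetricSpace Y] [MeasurableSpace Y] [BorelSpace Y]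
    (μX : Measure X) (μY : Measure Y) (ε δ : ℝ) (hε : 0 < ε)
    (d : X ⊕ Y → X ⊕ Y → ℝ) (hd : IsSemiMetricExt d)
    (hineq : ∀ A : Set (X ⊕ Y), MeasurableSet A →
      μY (Sum.inr ⁻¹' A) ≤ ENNReal.ofReal (Real.exp δ) * μX (Sum.inl ⁻¹' nbhdC d ε A) ∧
      μX (Sum.inl ⁻¹' A) ≤ ENNReal.ofReal (Real.exp δ) * μY (Sum.inr ⁻¹' nbhdC d ε A))
    (y : Y) (hy : y ∈ mSupp μY) :
    ∃ x ∈ mSupp μX, d (Sum.inl x) (Sum.inr y) ≤ ε := by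
  obtain ⟨hrefl, hnonneg, hsymm, htri, hXX, hYY⟩ := hd
  -- approximate points
  have step : ∀ r > 0, ∃ x ∈ mSupp μX, d (Sum.inl x) (Sum.inr y) ≤ ε + r := by
    intro r hr
    set A : Set (X ⊕ Y) := Sum.inr '' Metric.ball y r with hA
    have hAmeas : MeasurableSet A := by
      rw [measurableSet_sum_iff]
      constructor
      · have : Sum.inl ⁻¹' A = (∅ : Set X) := by ext x; simp [hA]
        rw [this]; exact MeasurableSet.empty
      · rw [hA, Set.preimage_image_eq _ Sum.inr_injective]
        exact measurableSet_ball
    have h1 := (hineq A hAmeas).1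
    rw [hA, Set.preimage_image_eq _ Sum.inr_injective] at h1
    have hpos : 0 < μY (Metric.ball y r) := hy r hr
    have hXpos : μX (Sum.inl ⁻¹' nbhdC d ε A) ≠ 0 := by
      intro h0
      rw [h0, mul_zero] at h1
      exact absurd (le_antisymm h1 (zero_le)) hpos.ne'
    obtain ⟨x, hxmem, hxsupp⟩ := exists_mem_mSupp μX hXpos
    obtain ⟨a, haA, hda⟩ := hxmem
    obtain ⟨y', hy', rfl⟩ := haA
    refine ⟨x, hxsupp, ?_⟩
    calc d (Sum.inl x) (Sum.inr y)
        ≤ d (Sum.inl x) (Sum.inr y') + d (Sum.inr y') (Sum.inr y) := htri _ _ _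
      _ = d (Sum.inl x) (Sum.inr y') + dist y' y := by rw [hYY]
      _ ≤ ε + r := add_le_add hda (le_of_lt (by simpa [dist_comm] using hy'))
  -- minimize the continuous function over the compact support
  set f : X → ℝ := fun x => d (Sum.inl x) (Sum.inr y) with hf
  have hlip : LipschitzWith 1 f := by
    apply LipschitzWith.of_dist_le_mul
    intro a b
    simp only [Real.dist_eq, NNReal.coe_one, one_mul]
    rw [abs_sub_le_iff]
    constructor
    · have := htri (Sum.inl a) (Sum.inl b) (Sum.inr y)
      rw [hXX] at this
      simp only [hf]; linarith [this, dist_comm a b ▸ (le_refl (dist a b))]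
    · have := htri (Sum.inl b) (Sum.inl a) (Sum.inr y)
      rw [hXX] at this
      simp only [hf]
      rw [dist_comm b a] at this
      linarith
  have hKcompact : IsCompact (mSupp μX) := (mSupp_isClosed μX).isCompact
  have hKne : (mSupp μX).Nonempty := by
    obtain ⟨x, hx, _⟩ := step 1 one_pos
    exact ⟨x, hx⟩
  obtain ⟨x0, hx0K, hx0min⟩ := hKcompact.exists_isMinOn hKne hlip.continuous.continuousOn
  refine ⟨x0, hx0K, ?_⟩
  apply le_of_forall_pos_le_add
  intro r hr
  obtain ⟨x, hxK, hxle⟩ := step r hr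
  exact le_trans (hx0min hxK) hxle

/-- Stability of the BIV condition under mm-relative `(ε,δ)`-closeness. -/
theorem BIV_stable_under_mm_closeness
    {X Y : Type*} [MetricSpace X] [CompactSpace X] [MeasurableSpace X] [BorelSpace X]
    [MetricSpace Y] [CompactSpace Y] [MeasurableSpace Y] [BorelSpace Y]
    (μX : Measure X) (μY : Measure Y) [IsFiniteMeasure μX] [IsFiniteMeasure μY]
    (Λ ρ ε δ : ℝ) (hΛ : 0 < Λ) (hδ : 0 ≤ δ) (hε : 0 < ε) (hερ : ε ≤ ρ / 12)
    (hclose : MMClose μX μY ε δ)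
    (hX : BIV μX Λ (ρ - 2 * ε) (5 * ε)) :
    BIV μY (Real.exp (2 * δ) * Λ) ρ ε := by
  obtain ⟨d, hd, hineq⟩ := hclose
  intro y1 hy1 y2 hy2 hdist
  obtain ⟨x1, hx1supp, hx1d⟩ :=
    exists_close_support_point μX μY ε δ hε d hd hineq y1 hy1
  obtain ⟨x2, hx2supp, hx2d⟩ :=
    exists_close_support_point μX μY ε δ hε d hd hineq y2 hy2
  obtain ⟨hrefl, hnonneg, hsymm, htri, hXX, hYY⟩ := hd
  set c := Real.exp δ with hc
  have hcpos : 0 < c := Real.exp_pos δ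
  -- Step 1
  have h1 : μY (Metric.ball y1 (ρ + ε))
      ≤ ENNReal.ofReal c * μX (Metric.ball x1 (ρ - 2 * ε + 5 * ε)) := by
    set A : Set (X ⊕ Y) := Sum.inr '' Metric.ball y1 (ρ + ε) with hA
    have hAmeas : MeasurableSet A := by
      rw [measurableSet_sum_iff]
      constructor
      · have : Sum.inl ⁻¹' A = (∅ : Set X) := by ext x; simp [hA]
        rw [this]; exact MeasurableSet.empty
      · rw [hA, Set.preimage_image_eq _ Sum.inr_injective]
        exact measurableSet_ball
    have h := (hineq A hAmeas).1
    rw [hA, Set.preimage_image_eq _ Sum.inr_injective] at h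
    refine h.trans (mul_le_mul_right (measure_mono ?_) _)
    intro x hx
    obtain ⟨a, haA, hda⟩ := hx
    obtain ⟨y', hy', rfl⟩ := haA
    rw [mem_ball] at hy' ⊢
    have hxy : dist x x1 ≤ d (Sum.inl x) (Sum.inr y') + dist y' y1
        + d (Sum.inl x1) (Sum.inr y1) := by
      have t1 := htri (Sum.inl x) (Sum.inr y') (Sum.inl x1)
      have t2 := htri (Sum.inr y') (Sum.inr y1) (Sum.inl x1)
      rw [hXX] at t1
      have hsy : d (Sum.inr y') (Sum.inr y1) = dist y' y1 := hYY _ _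
      have hsx : d (Sum.inr y1) (Sum.inl x1) = d (Sum.inl x1) (Sum.inr y1) := hsymm _ _
      linarith
    calc dist x x1 ≤ d (Sum.inl x) (Sum.inr y') + dist y' y1
          + d (Sum.inl x1) (Sum.inr y1) := hxy
      _ < ε + (ρ + ε) + ε := by
          have := add_lt_add_of_le_of_lt hda hy'
          linarith [hx1d]
      _ = ρ - 2 * ε + 5 * ε := by ring
  -- Step 2 (BIV on X)
  have hdx : dist x1 x2 ≤ ρ - 2 * ε + 5 * ε := by
    have t1 := htri (Sum.inl x1) (Sum.inr y1) (Sum.inl x2)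
    have t2 := htri (Sum.inr y1) (Sum.inr y2) (Sum.inl x2)
    rw [hXX] at t1
    have hyy : d (Sum.inr y1) (Sum.inr y2) = dist y1 y2 := hYY _ _
    have hsx : d (Sum.inr y2) (Sum.inl x2) = d (Sum.inl x2) (Sum.inr y2) := hsymm _ _
    have : dist x1 x2 ≤ d (Sum.inl x1) (Sum.inr y1) + dist y1 y2
        + d (Sum.inl x2) (Sum.inr y2) := by linarith
    linarith [hx1d, hx2d, hdist]
  have hbiv := hX x1 hx1supp x2 hx2supp hdx
  set I : Set X := Metric.ball x1 (ρ - 2 * ε) ∩ Metric.ball x2 (ρ - 2 * ε) with hI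
  have h2 : μX (Metric.ball x1 (ρ - 2 * ε + 5 * ε)) ≤ ENNReal.ofReal Λ * μX I := by
    have := mul_le_mul_right hbiv (ENNReal.ofReal Λ)
    rwa [← mul_assoc, ← ENNReal.ofReal_mul hΛ.le, mul_inv_cancel₀ hΛ.ne',
      ENNReal.ofReal_one, one_mul] at this
  -- Step 3
  have h3 : μX I ≤ ENNReal.ofReal c * μY (Metric.ball y1 ρ ∩ Metric.ball y2 ρ) := by
    set A : Set (X ⊕ Y) := Sum.inl '' I with hA
    have hAmeas : MeasurableSet A := by
      rw [measurableSet_sum_iff]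
      constructor
      · rw [hA, Set.preimage_image_eq _ Sum.inl_injective]
        exact (measurableSet_ball.inter measurableSet_ball)
      · have : Sum.inr ⁻¹' A = (∅ : Set Y) := by ext x; simp [hA]
        rw [this]; exact MeasurableSet.empty
    have h := (hineq A hAmeas).2
    rw [hA, Set.preimage_image_eq _ Sum.inl_injective] at h
    refine h.trans (mul_le_mul_right (measure_mono ?_) _)
    intro y hy
    obtain ⟨a, haA, hda⟩ := hy
    obtain ⟨x, hxI, rfl⟩ := haA
    obtain ⟨hx1', hx2'⟩ := hxI
    rw [mem_ball] at hx1' hx2'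
    constructor
    · rw [mem_ball]
      have t1 := htri (Sum.inr y) (Sum.inl x) (Sum.inr y1)
      have t2 := htri (Sum.inl x) (Sum.inl x1) (Sum.inr y1)
      rw [hXX] at t2
      rw [hYY] at t1
      calc dist y y1 ≤ d (Sum.inr y) (Sum.inl x) + (dist x x1
            + d (Sum.inl x1) (Sum.inr y1)) := by linarith
        _ < ε + ((ρ - 2 * ε) + ε) := by
            have := add_lt_add_of_le_of_lt hx1d hx1'
            linarith [hda]
        _ = ρ := by ring
    · rw [mem_ball]
      have t1 := htri (Sum.inr y) (Sum.inl x) (Sum.inr y2)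
      have t2 := htri (Sum.inl x) (Sum.inl x2) (Sum.inr y2)
      rw [hXX] at t2
      rw [hYY] at t1
      calc dist y y2 ≤ d (Sum.inr y) (Sum.inl x) + (dist x x2
            + d (Sum.inl x2) (Sum.inr y2)) := by linarith
        _ < ε + ((ρ - 2 * ε) + ε) := by
            have := add_lt_add_of_le_of_lt hx2d hx2'
            linarith [hda]
        _ = ρ := by ring
  -- Combine
  have key : μY (Metric.ball y1 (ρ + ε))
      ≤ ENNReal.ofReal (Real.exp (2 * δ) * Λ)
        * μY (Metric.ball y1 ρ ∩ Metric.ball y2 ρ) := by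
    calc μY (Metric.ball y1 (ρ + ε))
        ≤ ENNReal.ofReal c * μX (Metric.ball x1 (ρ - 2 * ε + 5 * ε)) := h1
      _ ≤ ENNReal.ofReal c * (ENNReal.ofReal Λ * μX I) := mul_le_mul_right h2 _
      _ ≤ ENNReal.ofReal c * (ENNReal.ofReal Λ
            * (ENNReal.ofReal c * μY (Metric.ball y1 ρ ∩ Metric.ball y2 ρ))) := by
          exact mul_le_mul_right (mul_le_mul_right h3 _) _
      _ = ENNReal.ofReal (Real.exp (2 * δ) * Λ)
            * μY (Metric.ball y1 ρ ∩ Metric.ball y2 ρ) := by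
          rw [two_mul, Real.exp_add, ← hc]
          rw [ENNReal.ofReal_mul (by positivity), ENNReal.ofReal_mul hcpos.le]
          ring
  have hpos : (0 : ℝ) < Real.exp (2 * δ) * Λ := by positivity
  rw [ENNReal.ofReal_inv_of_pos hpos, ← ENNReal.div_eq_inv_mul]
  exact ENNReal.div_le_of_le_mul' key
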